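/- Let k and l be positive integers with k ≢ l (mod 3). If ψ : ℝ → ℂ is three times continuously differentiable and satisfies ψ'''(x) + ψ'(x) + i·λ·ψ(x) = 0 for every x ∈ [0,L], together with the boundary conditions ψ(0) = ψ(L) = 0 and ψ'(0) = ψ'(L), then there exists c ∈ ℂ such that ψ(x) = c·φ(x) for all x ∈ [0,L]. -/

import Mathlib

open Complex Set

lemma hasDerivAt_cexp_mul (c : ℂ) (x : ℝ) :
    HasDerivAt (fun y : ℝ => Complex.exp (c * y)) (c * Complex.exp (c * x)) x := by
  have h : HasDerivAt (fun y : ℝ => (c * y : ℂ)) c x := by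
    simpa using (Complex.ofRealCLM.hasDerivAt (x := x)).const_mul c
  simpa [mul_comm] using h.cexp

lemma solve_lin {L : ℝ} {f f' : ℝ → ℂ} {c : ℂ}
    (hf : ∀ x, HasDerivAt f (f' x) x)
    (hode : ∀ x ∈ Set.Icc (0:ℝ) L, f' x = c * f x) :
    ∀ x ∈ Set.Icc (0:ℝ) L, f x = f 0 * Complex.exp (c * x) := by
  set F := fun x : ℝ => f x * Complex.exp (-c * x) with hF
  have hFd : ∀ x : ℝ, HasDerivAt F
      (f' x * Complex.exp (-c*x) + f x * (-c * Complex.exp (-c*x))) x :=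
    fun x => (hf x).mul (hasDerivAt_cexp_mul (-c) x)
  have key : ∀ x ∈ Set.Icc (0:ℝ) L, F x = F 0 := by
    apply constant_of_has_deriv_right_zero
      (fun x _ => (hFd x).continuousAt.continuousWithinAt)
    intro x hx
    have hx' : x ∈ Set.Icc (0:ℝ) L := ⟨hx.1, hx.2.le⟩
    have hz : f' x * Complex.exp (-c*x) + f x * (-c * Complex.exp (-c*x)) = 0 := by
      rw [hode x hx']; ring
    exact (hz ▸ (hFd x)).hasDerivWithinAt
  intro x hx
  have h := key x hx
  have hexp : Complex.exp (-c*(x:ℂ)) * Complex.exp (c*(x:ℂ)) = 1 := by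
    rw [← Complex.exp_add, show -c*(x:ℂ) + c*(x:ℂ) = 0 by ring, Complex.exp_zero]
  have hF0 : F 0 = f 0 := by simp [hF]
  calc f x = f x * (Complex.exp (-c*(x:ℂ)) * Complex.exp (c*(x:ℂ))) := by rw [hexp, mul_one]
    _ = F x * Complex.exp (c*(x:ℂ)) := by rw [hF]; ring
    _ = f 0 * Complex.exp (c * x) := by rw [h, hF0]

lemma solve_lin2 {L : ℝ} {f f' : ℝ → ℂ} {c d₁ d₂ C₁ C₂ : ℂ}
    (h1 : d₁ ≠ c) (h2 : d₂ ≠ c)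
    (hf : ∀ x, HasDerivAt f (f' x) x)
    (hode : ∀ x ∈ Set.Icc (0:ℝ) L,
      f' x = c * f x + C₁ * Complex.exp (d₁ * x) + C₂ * Complex.exp (d₂ * x)) :
    ∀ x ∈ Set.Icc (0:ℝ) L,
      f x = (f 0 - C₁/(d₁-c) - C₂/(d₂-c)) * Complex.exp (c * x)
        + C₁/(d₁-c) * Complex.exp (d₁ * x) + C₂/(d₂-c) * Complex.exp (d₂ * x) := by
  have e1 : d₁ - c ≠ 0 := sub_ne_zero.mpr h1
  have e2 : d₂ - c ≠ 0 := sub_ne_zero.mpr h2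
  set g : ℝ → ℂ := fun x => f x - C₁/(d₁-c) * Complex.exp (d₁*x) - C₂/(d₂-c) * Complex.exp (d₂*x)
    with hg
  have hgd : ∀ x, HasDerivAt g
      (f' x - C₁/(d₁-c) * (d₁ * Complex.exp (d₁*x)) - C₂/(d₂-c) * (d₂ * Complex.exp (d₂*x))) x :=
    fun x => ((hf x).sub ((hasDerivAt_cexp_mul d₁ x).const_mul _)).sub
      ((hasDerivAt_cexp_mul d₂ x).const_mul _)
  have hgo : ∀ x ∈ Set.Icc (0:ℝ) L,
      f' x - C₁/(d₁-c) * (d₁ * Complex.exp (d₁*x)) - C₂/(d₂-c) * (d₂ * Complex.exp (d₂*x))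
        = c * g x := by
    intro x hx
    rw [hode x hx, hg]
    field_simp
    ring
  have := solve_lin hgd hgo
  intro x hx
  have h := this x hx
  rw [hg] at h
  simp only [Complex.ofReal_zero, mul_zero, Complex.exp_zero, mul_one] at h
  linear_combination h

lemma ode_repr {a₁ a₂ a₃ lm L : ℝ}
    (h12 : a₁ ≠ a₂) (h13 : a₁ ≠ a₃) (h23 : a₂ ≠ a₃)
    (hsum : a₁ + a₂ + a₃ = 0)
    (hp2 : a₁*a₂ + a₁*a₃ + a₂*a₃ = -1)
    (hp3 : a₁*a₂*a₃ = lm)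
    {ψ : ℝ → ℂ} (hψ : ContDiff ℝ 3 ψ)
    (hode : ∀ x ∈ Set.Icc (0:ℝ) L,
      deriv (deriv (deriv ψ)) x + deriv ψ x + Complex.I * (lm:ℂ) * ψ x = 0) :
    ∃ b₁ b₂ b₃ : ℂ,
      (∀ x ∈ Set.Icc (0:ℝ) L,
        deriv ψ x - Complex.I * (a₃:ℂ) * ψ x
          = b₁ * Complex.exp (Complex.I * (a₁:ℂ) * x) + b₂ * Complex.exp (Complex.I * (a₂:ℂ) * x)) ∧
      (∀ x ∈ Set.Icc (0:ℝ) L,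
        ψ x = b₁ / (Complex.I * (a₁:ℂ) - Complex.I * (a₃:ℂ)) * Complex.exp (Complex.I * (a₁:ℂ) * x)
          + b₂ / (Complex.I * (a₂:ℂ) - Complex.I * (a₃:ℂ)) * Complex.exp (Complex.I * (a₂:ℂ) * x)
          + b₃ * Complex.exp (Complex.I * (a₃:ℂ) * x)) := by
  -- differentiability facts
  have hψ' : ContDiff ℝ ((2:ℕ) + 1) ψ := by exact_mod_cast hψ
  have H1 := contDiff_succ_iff_deriv.mp hψ'
  have hψ1 : ContDiff ℝ ((1:ℕ) + 1) (deriv ψ) := by exact_mod_cast H1.2.2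
  have H2 := contDiff_succ_iff_deriv.mp hψ1
  have hψ2 : ContDiff ℝ ((0:ℕ) + 1) (deriv (deriv ψ)) := by exact_mod_cast H2.2.2
  have H3 := contDiff_succ_iff_deriv.mp hψ2
  have hD0 : ∀ x : ℝ, HasDerivAt ψ (deriv ψ x) x := fun x => (H1.1 x).hasDerivAt
  have hD1 : ∀ x : ℝ, HasDerivAt (deriv ψ) (deriv (deriv ψ) x) x := fun x => (H2.1 x).hasDerivAt
  have hD2 : ∀ x : ℝ, HasDerivAt (deriv (deriv ψ)) (deriv (deriv (deriv ψ)) x) x :=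
    fun x => (H3.1 x).hasDerivAt
  have hsC : (a₁:ℂ) + (a₂:ℂ) + (a₃:ℂ) = 0 := by exact_mod_cast congrArg (Complex.ofReal) hsum
  have hp2C : (a₁:ℂ)*(a₂:ℂ) + (a₁:ℂ)*(a₃:ℂ) + (a₂:ℂ)*(a₃:ℂ) = -1 := by
    exact_mod_cast congrArg (Complex.ofReal) hp2
  have hp3C : (a₁:ℂ)*(a₂:ℂ)*(a₃:ℂ) = (lm:ℂ) := by
    exact_mod_cast congrArg (Complex.ofReal) hp3
  -- step 1 : u = ψ'' - i(a₂+a₃)ψ' - a₂a₃ψ  satisfies u' = i a₁ u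
  have hud : ∀ x : ℝ, HasDerivAt
      (fun x => deriv (deriv ψ) x - Complex.I*((a₂:ℂ)+(a₃:ℂ)) * deriv ψ x
        - ((a₂:ℂ)*(a₃:ℂ)) * ψ x)
      (deriv (deriv (deriv ψ)) x - Complex.I*((a₂:ℂ)+(a₃:ℂ)) * deriv (deriv ψ) x
        - ((a₂:ℂ)*(a₃:ℂ)) * deriv ψ x) x :=
    fun x => ((hD2 x).sub ((hD1 x).const_mul _)).sub ((hD0 x).const_mul _)
  have huode : ∀ x ∈ Set.Icc (0:ℝ) L,
      deriv (deriv (deriv ψ)) x - Complex.I*((a₂:ℂ)+(a₃:ℂ)) * deriv (deriv ψ) x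
        - ((a₂:ℂ)*(a₃:ℂ)) * deriv ψ x
      = (Complex.I*(a₁:ℂ)) * ((fun x => deriv (deriv ψ) x
          - Complex.I*((a₂:ℂ)+(a₃:ℂ)) * deriv ψ x - ((a₂:ℂ)*(a₃:ℂ)) * ψ x) x) := by
    intro x hx
    simp only
    linear_combination (hode x hx) - Complex.I * (deriv (deriv ψ) x) * hsC
      - (deriv ψ x) * hp2C + Complex.I * (ψ x) * hp3C
      + (((a₁:ℂ)*(a₂:ℂ) + (a₁:ℂ)*(a₃:ℂ)) * deriv ψ x) * Complex.I_sq
  have hu2 := solve_lin hud huode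
  -- step 2 : w = ψ' - i a₃ ψ
  have hIne12 : Complex.I * (a₁:ℂ) ≠ Complex.I * (a₂:ℂ) := fun h =>
    h12 (Complex.ofReal_injective (mul_left_cancel₀ Complex.I_ne_zero h))
  have hIne13 : Complex.I * (a₁:ℂ) ≠ Complex.I * (a₃:ℂ) := fun h =>
    h13 (Complex.ofReal_injective (mul_left_cancel₀ Complex.I_ne_zero h))
  have hIne23 : Complex.I * (a₂:ℂ) ≠ Complex.I * (a₃:ℂ) := fun h =>
    h23 (Complex.ofReal_injective (mul_left_cancel₀ Complex.I_ne_zero h))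
  have hIne2' : Complex.I * (a₂:ℂ) + 1 ≠ Complex.I * (a₂:ℂ) := by simp
  have hwd : ∀ x : ℝ, HasDerivAt (fun x => deriv ψ x - Complex.I*(a₃:ℂ) * ψ x)
      (deriv (deriv ψ) x - Complex.I*(a₃:ℂ) * deriv ψ x) x :=
    fun x => (hD1 x).sub ((hD0 x).const_mul _)
  have hwode : ∀ x ∈ Set.Icc (0:ℝ) L,
      deriv (deriv ψ) x - Complex.I*(a₃:ℂ) * deriv ψ x
      = (Complex.I*(a₂:ℂ)) * ((fun x => deriv ψ x - Complex.I*(a₃:ℂ) * ψ x) x)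
        + (deriv (deriv ψ) 0 - Complex.I*((a₂:ℂ)+(a₃:ℂ)) * deriv ψ 0 - ((a₂:ℂ)*(a₃:ℂ)) * ψ 0)
          * Complex.exp ((Complex.I*(a₁:ℂ)) * x)
        + 0 * Complex.exp ((Complex.I*(a₂:ℂ) + 1) * x) := by
    intro x hx
    simp only
    linear_combination (hu2 x hx) + ((a₂:ℂ)*(a₃:ℂ) * ψ x) * Complex.I_sq
  have hw2 := solve_lin2 hIne12 hIne2' hwd hwode
  simp only [Complex.ofReal_zero, mul_zero, Complex.exp_zero, mul_one, zero_div, zero_mul,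
    add_zero, sub_zero] at hw2
  set b₁ : ℂ := (deriv (deriv ψ) 0 - Complex.I*((a₂:ℂ)+(a₃:ℂ)) * deriv ψ 0
      - ((a₂:ℂ)*(a₃:ℂ)) * ψ 0) / (Complex.I*(a₁:ℂ) - Complex.I*(a₂:ℂ)) with hb₁
  set b₂ : ℂ := (deriv ψ 0 - Complex.I*(a₃:ℂ) * ψ 0) - b₁ with hb₂
  have hwrep : ∀ x ∈ Set.Icc (0:ℝ) L,
      deriv ψ x - Complex.I * (a₃:ℂ) * ψ x
        = b₁ * Complex.exp (Complex.I * (a₁:ℂ) * x) + b₂ * Complex.exp (Complex.I * (a₂:ℂ) * x) := by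
    intro x hx
    linear_combination (hw2 x hx)
  -- step 3 : ψ itself
  have hode3 : ∀ x ∈ Set.Icc (0:ℝ) L,
      deriv ψ x = (Complex.I*(a₃:ℂ)) * ψ x + b₁ * Complex.exp ((Complex.I*(a₁:ℂ)) * x)
        + b₂ * Complex.exp ((Complex.I*(a₂:ℂ)) * x) := by
    intro x hx
    linear_combination (hwrep x hx)
  have hψrep := solve_lin2 hIne13 hIne23 hD0 hode3
  refine ⟨b₁, b₂,
    ψ 0 - b₁/(Complex.I*(a₁:ℂ) - Complex.I*(a₃:ℂ)) - b₂/(Complex.I*(a₂:ℂ) - Complex.I*(a₃:ℂ)),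
    hwrep, ?_⟩
  intro x hx
  linear_combination (hψrep x hx)




noncomputable section

/-- `n = k² + k·l + l²` as a real number. -/
def nR (k l : ℕ) : ℝ := ((k ^ 2 + k * l + l ^ 2 : ℕ) : ℝ)

/-- The critical length `L = 2π√(n/3)`. -/
def LL (k l : ℕ) : ℝ := 2 * Real.pi * Real.sqrt (nR k l / 3)

/-- `λ = (2k+l)(k−l)(2l+k)/(3√3 n^{3/2})`. -/
def lam (k l : ℕ) : ℝ :=
  ((2 * k + l : ℕ) : ℝ) * ((k : ℝ) - (l : ℝ)) * ((2 * l + k : ℕ) : ℝ) /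
    (3 * Real.sqrt 3 * nR k l ^ ((3 : ℝ) / 2))

/-- The Type 1 eigenfunction `φ`. -/
def phi (k l : ℕ) : ℝ → ℂ := fun x =>
  -Complex.exp (Complex.I *
      ((x * (Real.sqrt 3 * ((2 * k + l : ℕ) : ℝ)) / (3 * Real.sqrt (nR k l)) : ℝ) : ℂ))
  - ((k : ℂ) / (l : ℂ)) * Complex.exp (-(Complex.I *
      ((x * (Real.sqrt 3 * ((k + 2 * l : ℕ) : ℝ)) / (3 * Real.sqrt (nR k l)) : ℝ) : ℂ)))
  + (((k : ℂ) + (l : ℂ)) / (l : ℂ)) * Complex.exp (Complex.I *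
      ((x * (Real.sqrt 3 * ((l : ℝ) - (k : ℝ))) / (3 * Real.sqrt (nR k l)) : ℝ) : ℂ))

/-- The Type 2 eigenfunction `φ̃`. -/
def phiT (k l : ℕ) : ℝ → ℂ := fun x =>
  Complex.exp (Complex.I *
      ((x * (Real.sqrt 3 * ((2 * k + l : ℕ) : ℝ)) / (3 * Real.sqrt (nR k l)) : ℝ) : ℂ))
  - Complex.exp (-(Complex.I *
      ((x * (Real.sqrt 3 * ((k + 2 * l : ℕ) : ℝ)) / (3 * Real.sqrt (nR k l)) : ℝ) : ℂ)))

end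

set_option maxHeartbeats 2000000 in
theorem stmt_6 (k l : ℕ) (hk : 0 < k) (hl : 0 < l) (hmod : ¬ k ≡ l [MOD 3])
    (ψ : ℝ → ℂ) (hψ : ContDiff ℝ 3 ψ)
    (hode : ∀ x ∈ Set.Icc (0 : ℝ) (LL k l),
      deriv (deriv (deriv ψ)) x + deriv ψ x + Complex.I * ((lam k l : ℝ) : ℂ) * ψ x = 0)
    (h0 : ψ 0 = 0) (hLv : ψ (LL k l) = 0)
    (hd : deriv ψ 0 = deriv ψ (LL k l)) :
    ∃ c : ℂ, ∀ x ∈ Set.Icc (0 : ℝ) (LL k l), ψ x = c * phi k l x := by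
  -- main proof
  have hk' : (0:ℝ) < k := by exact_mod_cast hk
  have hl' : (0:ℝ) < l := by exact_mod_cast hl
  have hn : (0:ℝ) < nR k l := by
    have : 0 < k^2 + k*l + l^2 := by positivity
    unfold nR; exact_mod_cast this
  have hnkl : nR k l = (k:ℝ)^2 + (k:ℝ)*(l:ℝ) + (l:ℝ)^2 := by unfold nR; push_cast; ring
  set s : ℝ := Real.sqrt (nR k l) with hsdef
  have hs : 0 < s := Real.sqrt_pos.mpr hn
  have hs2 : s^2 = nR k l := Real.sq_sqrt hn.le
  set t : ℝ := Real.sqrt 3 with htdef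
  have ht : 0 < t := Real.sqrt_pos.mpr (by norm_num)
  have ht2 : t^2 = 3 := Real.sq_sqrt (by norm_num)
  set a₁ : ℝ := t * (2*(k:ℝ)+(l:ℝ)) / (3*s) with ha₁
  set a₂ : ℝ := -(t * ((k:ℝ)+2*(l:ℝ)) / (3*s)) with ha₂
  set a₃ : ℝ := t * ((l:ℝ)-(k:ℝ)) / (3*s) with ha₃
  have ha₁pos : 0 < a₁ := by rw [ha₁]; positivity
  have ha₂neg : a₂ < 0 := by
    rw [ha₂]; have : 0 < t * ((k:ℝ)+2*(l:ℝ)) / (3*s) := by positivity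
    linarith
  have hd13 : a₁ - a₃ = t*(k:ℝ)/s := by rw [ha₁, ha₃]; field_simp; ring
  have hd23 : a₂ - a₃ = -(t*(l:ℝ)/s) := by rw [ha₂, ha₃]; field_simp; ring
  have h12 : a₁ ≠ a₂ := by intro h; rw [h] at ha₁pos; linarith
  have h13 : a₁ ≠ a₃ := by
    intro h; rw [h, sub_self] at hd13
    have : (0:ℝ) < t*(k:ℝ)/s := by positivity
    linarith [hd13]
  have h23 : a₂ ≠ a₃ := by
    intro h; rw [h, sub_self] at hd23
    have : (0:ℝ) < t*(l:ℝ)/s := by positivity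
    linarith [hd23]
  have hsum : a₁ + a₂ + a₃ = 0 := by rw [ha₁, ha₂, ha₃]; field_simp; ring
  have hp2 : a₁*a₂ + a₁*a₃ + a₂*a₃ = -1 := by
    rw [ha₁, ha₂, ha₃]
    field_simp
    linear_combination (-(3*((k:ℝ)^2+(k:ℝ)*(l:ℝ)+(l:ℝ)^2))) * ht2
      + 9 * hs2 + 9 * hnkl
  have hrpow : nR k l ^ ((3:ℝ)/2) = s^3 := by
    have h1 : nR k l ^ ((3:ℝ)/2) = (nR k l ^ ((2:ℝ)⁻¹))^(3:ℕ) := by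
      rw [← Real.rpow_natCast (nR k l ^ ((2:ℝ)⁻¹)) 3, ← Real.rpow_mul hn.le]
      norm_num
    rw [h1, show (2:ℝ)⁻¹ = 1/2 by norm_num, ← Real.sqrt_eq_rpow]
  have hp3 : a₁*a₂*a₃ = lam k l := by
    unfold lam
    rw [hrpow, ha₁, ha₂, ha₃]
    push_cast
    field_simp
    rw [← htdef]
    linear_combination (((k:ℝ)+2*(l:ℝ))*((k:ℝ)-(l:ℝ))*(t^2+3)) * ht2
  obtain ⟨b₁, b₂, b₃, hw, hrep⟩ := ode_repr h12 h13 h23 hsum hp2 hp3 hψ hode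
  have hL0 : 0 ≤ LL k l := by unfold LL; positivity
  have h0mem : (0:ℝ) ∈ Set.Icc (0:ℝ) (LL k l) := ⟨le_refl _, hL0⟩
  have hLmem : LL k l ∈ Set.Icc (0:ℝ) (LL k l) := ⟨hL0, le_refl _⟩
  have hsq3 : Real.sqrt (nR k l / 3) = s / t := by
    rw [hsdef, htdef]; exact Real.sqrt_div hn.le 3
  have hAL1 : a₁ * LL k l = 2*Real.pi*(2*(k:ℝ)+(l:ℝ))/3 := by
    unfold LL; rw [hsq3, ha₁]; field_simp
  have hAL2 : a₂ * LL k l = -(2*Real.pi*((k:ℝ)+2*(l:ℝ))/3) := by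
    unfold LL; rw [hsq3, ha₂]; field_simp
  have hE : Complex.exp (Complex.I * (a₁:ℂ) * ((LL k l : ℝ):ℂ))
      = Complex.exp (Complex.I * (a₂:ℂ) * ((LL k l : ℝ):ℂ)) := by
    rw [Complex.exp_eq_exp_iff_exists_int]
    refine ⟨(k:ℤ)+(l:ℤ), ?_⟩
    have h1 : ((a₁ * LL k l : ℝ):ℂ) = ((2*Real.pi*(2*(k:ℝ)+(l:ℝ))/3 : ℝ):ℂ) := by rw [hAL1]
    have h2 : ((a₂ * LL k l : ℝ):ℂ) = ((-(2*Real.pi*((k:ℝ)+2*(l:ℝ))/3) : ℝ):ℂ) := by rw [hAL2]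
    push_cast at h1 h2 ⊢
    linear_combination Complex.I * h1 - Complex.I * h2
  have hEne : Complex.exp (Complex.I * (a₂:ℂ) * ((LL k l : ℝ):ℂ)) ≠ 1 := by
    intro hEx
    rw [Complex.exp_eq_one_iff] at hEx
    obtain ⟨m, hm⟩ := hEx
    have hm2 : Complex.I * (((a₂:ℂ)) * ((LL k l : ℝ):ℂ)) = Complex.I * ((m:ℂ) * (2*(Real.pi:ℂ))) := by
      linear_combination hm
    have h := mul_left_cancel₀ Complex.I_ne_zero hm2
    have h' : a₂ * LL k l = (m:ℝ) * (2*Real.pi) := by exact_mod_cast h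
    rw [hAL2] at h'
    have hπ : (0:ℝ) < 2*Real.pi := by positivity
    have h'' : -(((k:ℝ)+2*(l:ℝ))/3) = (m:ℝ) := by
      have := mul_left_cancel₀ (ne_of_gt hπ) (show (2*Real.pi) * (-(((k:ℝ)+2*(l:ℝ))/3)) = (2*Real.pi) * (m:ℝ) by linarith [h'])
      exact this
    have hz : (k:ℤ) + 2*(l:ℤ) = -3*m := by
      have : ((k:ℝ)+2*(l:ℝ)) = -3*(m:ℝ) := by linarith [h'']
      exact_mod_cast this
    simp only [Nat.ModEq] at hmod
    omega
  -- coefficient relations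
  have hw0 := hw 0 h0mem
  rw [h0] at hw0
  simp only [Complex.ofReal_zero, mul_zero, Complex.exp_zero, mul_one, sub_zero] at hw0
  have hwL := hw (LL k l) hLmem
  rw [hLv, hE] at hwL
  simp only [mul_zero, sub_zero] at hwL
  have hbb : b₁ + b₂ = 0 := by
    have h1 : b₁ + b₂ = (b₁ + b₂) * Complex.exp (Complex.I * (a₂:ℂ) * ((LL k l : ℝ):ℂ)) := by
      conv_lhs => rw [← hw0, hd, hwL]
      ring
    have h2 : (b₁ + b₂) * (1 - Complex.exp (Complex.I * (a₂:ℂ) * ((LL k l : ℝ):ℂ))) = 0 := by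
      linear_combination h1
    rcases mul_eq_zero.mp h2 with h | h
    · exact h
    · exact absurd (sub_eq_zero.mp h).symm hEne
  set C1 : ℂ := b₁ / (Complex.I*(a₁:ℂ) - Complex.I*(a₃:ℂ)) with hC1
  set C2 : ℂ := b₂ / (Complex.I*(a₂:ℂ) - Complex.I*(a₃:ℂ)) with hC2
  have hIne13 : Complex.I * (a₁:ℂ) - Complex.I * (a₃:ℂ) ≠ 0 := by
    rw [sub_ne_zero]
    exact fun h => h13 (Complex.ofReal_injective (mul_left_cancel₀ Complex.I_ne_zero h))
  have hIne23 : Complex.I * (a₂:ℂ) - Complex.I * (a₃:ℂ) ≠ 0 := by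
    rw [sub_ne_zero]
    exact fun h => h23 (Complex.ofReal_injective (mul_left_cancel₀ Complex.I_ne_zero h))
  have hb1' : C1 * (Complex.I*(a₁:ℂ) - Complex.I*(a₃:ℂ)) = b₁ := div_mul_cancel₀ b₁ hIne13
  have hb2' : C2 * (Complex.I*(a₂:ℂ) - Complex.I*(a₃:ℂ)) = b₂ := div_mul_cancel₀ b₂ hIne23
  have hsum0 : C1 * (Complex.I*(a₁:ℂ) - Complex.I*(a₃:ℂ))
      + C2 * (Complex.I*(a₂:ℂ) - Complex.I*(a₃:ℂ)) = 0 := by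
    linear_combination hb1' + hb2' + hbb
  have hd13C : (a₁:ℂ) - (a₃:ℂ) = (t:ℂ)*(k:ℂ)/(s:ℂ) := by exact_mod_cast congrArg Complex.ofReal hd13
  have hd23C : (a₂:ℂ) - (a₃:ℂ) = -((t:ℂ)*(l:ℂ)/(s:ℂ)) := by
    exact_mod_cast congrArg Complex.ofReal hd23
  have htC : (t:ℂ) ≠ 0 := by exact_mod_cast ht.ne'
  have hsC' : (s:ℂ) ≠ 0 := by exact_mod_cast hs.ne'
  have hkey : Complex.I * ((t:ℂ)*(k:ℂ)/(s:ℂ)) * C1 - Complex.I * ((t:ℂ)*(l:ℂ)/(s:ℂ)) * C2 = 0 := by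
    linear_combination hsum0 - (Complex.I*C1)*hd13C - (Complex.I*C2)*hd23C
  have hklC : (k:ℂ) * C1 = (l:ℂ) * C2 := by
    field_simp at hkey
    have h2 : (Complex.I*(t:ℂ))*((k:ℂ)*C1 - (l:ℂ)*C2) = (Complex.I*(t:ℂ))*0 := by
      linear_combination hkey
    have h3 := mul_left_cancel₀ (mul_ne_zero Complex.I_ne_zero htC) h2
    linear_combination h3
  have hr0 := hrep 0 h0mem
  rw [h0] at hr0
  simp only [Complex.ofReal_zero, mul_zero, Complex.exp_zero, mul_one] at hr0
  refine ⟨-C1, ?_⟩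
  intro x hx
  rw [hrep x hx]
  unfold phi
  rw [← htdef, ← hsdef]
  have he1 : Complex.I * ((x * (t * ((2*k+l : ℕ):ℝ)) / (3*s) : ℝ) : ℂ)
      = Complex.I * (a₁:ℂ) * (x:ℂ) := by rw [ha₁]; push_cast; ring
  have he2 : -(Complex.I * ((x * (t * ((k+2*l : ℕ):ℝ)) / (3*s) : ℝ) : ℂ))
      = Complex.I * (a₂:ℂ) * (x:ℂ) := by rw [ha₂]; push_cast; ring
  have he3 : Complex.I * ((x * (t * ((l:ℝ)-(k:ℝ))) / (3*s) : ℝ) : ℂ)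
      = Complex.I * (a₃:ℂ) * (x:ℂ) := by rw [ha₃]; push_cast; ring
  rw [he1, he2, he3]
  have hb3 : b₃ = -C1 - C2 := by linear_combination -hr0
  rw [hb3]
  have hl0 : (l:ℂ) ≠ 0 := by exact_mod_cast hl'.ne'
  field_simp
  linear_combination (norm := ring_nf) (Complex.exp (Complex.I * (a₃:ℂ) * (x:ℂ))
    - Complex.exp (Complex.I * (a₂:ℂ) * (x:ℂ))) * hklC
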